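/- Let I = (f_1, …, f_s) be a homogeneous ideal of R, with each f_i a homogeneous polynomial, and let M be a generalized Eulerian A_n(K)-module. Then the local cohomology module H^i_I(M) is a generalized Eulerian A_n(K)-module for every i ≥ 0. -/

import Mathlib

/-! ### The Weyl algebra `A_n(K)` as a quotient of the free algebra. -/

/-- The defining relations of the `n`-th Weyl algebra: the `X_i` commute, the `∂_i` commute,
and `∂_i X_j = X_j ∂_i + δ_{ij}`. -/
inductive WeylRel (K : Type) [Field K] (n : ℕ) :
    FreeAlgebra K (Fin n ⊕ Fin n) → FreeAlgebra K (Fin n ⊕ Fin n) → Prop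
  | xx (i j : Fin n) : WeylRel K n
      (FreeAlgebra.ι K (Sum.inl i) * FreeAlgebra.ι K (Sum.inl j))
      (FreeAlgebra.ι K (Sum.inl j) * FreeAlgebra.ι K (Sum.inl i))
  | dd (i j : Fin n) : WeylRel K n
      (FreeAlgebra.ι K (Sum.inr i) * FreeAlgebra.ι K (Sum.inr j))
      (FreeAlgebra.ι K (Sum.inr j) * FreeAlgebra.ι K (Sum.inr i))
  | dx (i j : Fin n) : WeylRel K n
      (FreeAlgebra.ι K (Sum.inr i) * FreeAlgebra.ι K (Sum.inl j))
      (FreeAlgebra.ι K (Sum.inl j) * FreeAlgebra.ι K (Sum.inr i) + if i = j then 1 else 0)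

/-- The `n`-th Weyl algebra over `K`. -/
abbrev WeylAlgebra (K : Type) [Field K] (n : ℕ) : Type := RingQuot (WeylRel K n)

/-- The variable `X_i` (degree `+1`) in the Weyl algebra. -/
noncomputable def Wx (K : Type) [Field K] {n : ℕ} (i : Fin n) : WeylAlgebra K n :=
  RingQuot.mkAlgHom K (WeylRel K n) (FreeAlgebra.ι K (Sum.inl i))

/-- The partial derivative `∂_i` (degree `-1`) in the Weyl algebra. -/
noncomputable def Wd (K : Type) [Field K] {n : ℕ} (i : Fin n) : WeylAlgebra K n :=
  RingQuot.mkAlgHom K (WeylRel K n) (FreeAlgebra.ι K (Sum.inr i))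

/-- The Euler operator `ℰ_n = ∑ X_i ∂_i`. -/
noncomputable def weylEuler (K : Type) [Field K] (n : ℕ) : WeylAlgebra K n :=
  ∑ i : Fin n, Wx K i * Wd K i

/-- The Euler operator `ℰ_r = ∑_{i < r} X_i ∂_i` of the subalgebra `A_r(K) ⊆ A_n(K)`. -/
noncomputable def weylEulerUpTo (K : Type) [Field K] (n r : ℕ) : WeylAlgebra K n :=
  ∑ i ∈ Finset.univ.filter (fun i : Fin n => (i : ℕ) < r), Wx K i * Wd K i

/-- Monomials of degree `d` in the variables `X_1, …, X_n` inside the Weyl algebra. -/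
def xMonomials (K : Type) [Field K] (n d : ℕ) : Set (WeylAlgebra K n) :=
  {w | ∃ l : List (Fin n), l.length = d ∧ w = (l.map (Wx K)).prod}

/-- `f` is a homogeneous polynomial of degree `d` in `R = K[X_1, …, X_n] ⊆ A_n(K)`. -/
def IsHomogPoly (K : Type) [Field K] {n : ℕ} (f : WeylAlgebra K n) (d : ℕ) : Prop :=
  f ∈ Submodule.span K (xMonomials K n d)

/-! ### Graded (left) modules over the Weyl algebra. -/

/-- A graded left `A_n(K)`-module: a module over the Weyl algebra together with an internal
`ℤ`-grading, stable under `K` and such that `X_i` raises degree by one and `∂_i` lowers it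
by one. -/
structure GWM (K : Type) [Field K] (n : ℕ) where
  carrier : Type
  [acg : AddCommGroup carrier]
  [mod : Module (WeylAlgebra K n) carrier]
  deg : ℤ → AddSubgroup carrier
  isInternal : DirectSum.IsInternal deg
  k_smul : ∀ (c : K) (j : ℤ) (m : carrier), m ∈ deg j →
    algebraMap K (WeylAlgebra K n) c • m ∈ deg j
  x_smul : ∀ (i : Fin n) (j : ℤ) (m : carrier), m ∈ deg j → Wx K i • m ∈ deg (j + 1)
  d_smul : ∀ (i : Fin n) (j : ℤ) (m : carrier), m ∈ deg j → Wd K i • m ∈ deg (j - 1)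

attribute [instance] GWM.acg GWM.mod

instance {K : Type} [Field K] {n : ℕ} : CoeSort (GWM K n) Type := ⟨GWM.carrier⟩

/-- A graded `A_n(K)`-module is *generalized Eulerian* if every homogeneous element `z`
is killed by some power of `ℰ_n - |z|`. -/
def GWM.IsGenEulerian {K : Type} [Field K] {n : ℕ} (M : GWM K n) : Prop :=
  ∀ (j : ℤ) (m : M.carrier), m ∈ M.deg j →
    ∃ a : ℕ, 1 ≤ a ∧ ((weylEuler K n - (j : WeylAlgebra K n)) ^ a) • m = 0

/-- A graded module is concentrated in degree `d` if all other graded pieces vanish. -/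
def GWM.ConcentratedIn {K : Type} [Field K] {n : ℕ} (M : GWM K n) (d : ℤ) : Prop :=
  ∀ j : ℤ, j ≠ d → M.deg j = ⊥

/-! ### Koszul (co)homology of a graded module with respect to commuting operators.

The Koszul complex of operators `u : Fin c → A_n(K)` on `M` has, in homological level `i`,
the module of functions from `i`-element subsets of `Fin c` to `M`.  Cohomology `H^ν` is
homology in level `c - ν`. -/

/-- Level `i` of the Koszul complex on `c` operators with values in `M`. -/
abbrev KosLevel {K : Type} [Field K] {n : ℕ} (M : GWM K n) (c : ℕ) (i : ℤ) : Type :=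
  {S : Finset (Fin c) // (S.card : ℤ) = i} → M.carrier

/-- The Koszul differential (from level `a` to level `b`; it is the genuine differential
when `b = a - 1`): `(dψ)(T) = ∑_{k ∉ T} (-1)^{|{x ∈ T | x < k}|} u_k • ψ(T ∪ {k})`. -/
noncomputable def kosDiff {K : Type} [Field K] {n : ℕ} {M : GWM K n} {c : ℕ}
    (u : Fin c → WeylAlgebra K n) (a b : ℤ) (ψ : KosLevel M c a)
    (T : {S : Finset (Fin c) // (S.card : ℤ) = b}) : M.carrier :=
  ∑ k ∈ (T.1)ᶜ, ((-1 : ℤ) ^ ((T.1.filter (fun x => x < k)).card)) •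
    (u k • (if h : (((insert k T.1).card : ℤ)) = a then ψ ⟨insert k T.1, h⟩ else 0))

/-- A Koszul `i`-chain is a cycle if the differential to level `i - 1` kills it. -/
def kosIsCycle {K : Type} [Field K] {n : ℕ} {M : GWM K n} {c : ℕ}
    (u : Fin c → WeylAlgebra K n) (i : ℤ) (φ : KosLevel M c i) : Prop :=
  ∀ T, kosDiff u i (i - 1) φ T = 0

/-- A Koszul `i`-chain is a boundary if it is the image of an `(i+1)`-chain. -/
def kosIsBoundary {K : Type} [Field K] {n : ℕ} {M : GWM K n} {c : ℕ}
    (u : Fin c → WeylAlgebra K n) (i : ℤ) (φ : KosLevel M c i) : Prop :=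
  ∃ ψ : KosLevel M c (i + 1), (fun T => kosDiff u (i + 1) i ψ T) = φ

/-- A Koszul `i`-chain is homogeneous of (internal) degree `j`: on a subset `S` its value
lies in degree `j - ∑_{k ∈ S} deg u_k`, where `du k` is the degree of the operator `u k`. -/
def kosHomog {K : Type} [Field K] {n : ℕ} {M : GWM K n} {c : ℕ}
    (du : Fin c → ℤ) (i j : ℤ) (φ : KosLevel M c i) : Prop :=
  ∀ S : {S : Finset (Fin c) // (S.card : ℤ) = i}, φ S ∈ M.deg (j - ∑ k ∈ S.1, du k)

/-! ### Čech complexes.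

Local cohomology `H^i_I(M)` for a homogeneous ideal `I = (f_1, …, f_s)` is the `i`-th
cohomology of the Čech complex `0 → M → ⊕ M_{f_k} → ⋯`.  We encode the Čech complex by
abstract data: a family of graded `A_n(K)`-modules `L S` (for `S ⊆ {1,…,s}`), each of which
is the localization of `M` at `∏_{k ∈ S} f_k` (characterized by the usual universal
properties: the element acts bijectively, every element is a fraction, and the kernel of the
localization map is the torsion). -/

/-- The product `f_S = ∏_{k ∈ S} f_k` (as an ordered list product). -/
noncomputable def cechProd {K : Type} [Field K] {n : ℕ} {s : ℕ}
    (f : Fin s → WeylAlgebra K n) (S : Finset (Fin s)) : WeylAlgebra K n :=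
  ((S.sort (· ≤ ·)).map f).prod

/-- Data presenting the Čech complex of a graded `A_n(K)`-module `M` with respect to the
elements `f : Fin s → A_n(K)`. -/
structure CechData (K : Type) [Field K] (n : ℕ) (M : GWM K n) (s : ℕ)
    (f : Fin s → WeylAlgebra K n) where
  /-- `L S` is the localization `M_{f_S}`, `f_S = ∏_{k ∈ S} f_k`. -/
  L : Finset (Fin s) → GWM K n
  /-- localization maps `M_{f_S} → M_{f_T}` for `S ⊆ T`. -/
  ρ : ∀ {S T : Finset (Fin s)}, S ⊆ T → (L S).carrier → (L T).carrier
  ρ_add : ∀ {S T : Finset (Fin s)} (h : S ⊆ T) (x y : (L S).carrier),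
    ρ h (x + y) = ρ h x + ρ h y
  ρ_smul : ∀ {S T : Finset (Fin s)} (h : S ⊆ T) (w : WeylAlgebra K n) (x : (L S).carrier),
    ρ h (w • x) = w • ρ h x
  ρ_deg : ∀ {S T : Finset (Fin s)} (h : S ⊆ T) (j : ℤ) (x : (L S).carrier),
    x ∈ (L S).deg j → ρ h x ∈ (L T).deg j
  ρ_id : ∀ (S : Finset (Fin s)) (x : (L S).carrier), ρ (le_refl S) x = x
  ρ_comp : ∀ {S T U : Finset (Fin s)} (h1 : S ⊆ T) (h2 : T ⊆ U) (x : (L S).carrier),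
    ρ h2 (ρ h1 x) = ρ (h1.trans h2) x
  /-- the identification of `M` with the empty localization. -/
  η : M.carrier → (L ∅).carrier
  η_add : ∀ x y, η (x + y) = η x + η y
  η_smul : ∀ (w : WeylAlgebra K n) (x : M.carrier), η (w • x) = w • η x
  η_deg : ∀ (j : ℤ) (x : M.carrier), x ∈ M.deg j → η x ∈ (L ∅).deg j
  η_bij : Function.Bijective η
  loc_bij : ∀ S : Finset (Fin s),
    Function.Bijective (fun z : (L S).carrier => (cechProd f S) • z)
  loc_surj : ∀ (S : Finset (Fin s)) (z : (L S).carrier),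
    ∃ (m : M.carrier) (k : ℕ), ((cechProd f S) ^ k) • z = ρ (Finset.empty_subset S) (η m)
  loc_ker : ∀ (S : Finset (Fin s)) (m : M.carrier),
    ρ (Finset.empty_subset S) (η m) = 0 ↔ ∃ k : ℕ, ((cechProd f S) ^ k) • m = 0

/-- Level `i` of the Čech complex. -/
abbrev CechLevel {K : Type} [Field K] {n : ℕ} {M : GWM K n} {s : ℕ}
    {f : Fin s → WeylAlgebra K n} (D : CechData K n M s f) (i : ℤ) : Type :=
  ∀ S : {S : Finset (Fin s) // (S.card : ℤ) = i}, (D.L S.1).carrier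

/-- The Čech differential (from level `a` to level `b`; it is the genuine coboundary when
`b = a + 1`): `(dψ)(T) = ∑_{k ∈ T} (-1)^{|{x ∈ T | x < k}|} ρ(ψ(T \ {k}))`. -/
noncomputable def cechDiff {K : Type} [Field K] {n : ℕ} {M : GWM K n} {s : ℕ}
    {f : Fin s → WeylAlgebra K n} (D : CechData K n M s f) (a b : ℤ) (ψ : CechLevel D a)
    (T : {S : Finset (Fin s) // (S.card : ℤ) = b}) : (D.L T.1).carrier :=
  ∑ k ∈ T.1.attach, ((-1 : ℤ) ^ ((T.1.filter (fun x => x < k.1)).card)) •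
    (if h : (((T.1.erase k.1).card : ℤ)) = a then
      D.ρ (Finset.erase_subset k.1 T.1) (ψ ⟨T.1.erase k.1, h⟩) else 0)

def cechIsCycle {K : Type} [Field K] {n : ℕ} {M : GWM K n} {s : ℕ}
    {f : Fin s → WeylAlgebra K n} (D : CechData K n M s f) (i : ℤ)
    (φ : CechLevel D i) : Prop :=
  ∀ T, cechDiff D i (i + 1) φ T = 0

def cechIsBoundary {K : Type} [Field K] {n : ℕ} {M : GWM K n} {s : ℕ}
    {f : Fin s → WeylAlgebra K n} (D : CechData K n M s f) (i : ℤ)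
    (φ : CechLevel D i) : Prop :=
  ∃ ψ : CechLevel D (i - 1), (fun T => cechDiff D (i - 1) i ψ T) = φ

def cechHomog {K : Type} [Field K] {n : ℕ} {M : GWM K n} {s : ℕ}
    {f : Fin s → WeylAlgebra K n} (D : CechData K n M s f) (i j : ℤ)
    (φ : CechLevel D i) : Prop :=
  ∀ S : {S : Finset (Fin s) // (S.card : ℤ) = i}, φ S ∈ (D.L S.1).deg j

/-- `W` realizes the `i`-th cohomology of the Čech complex `D`, i.e. `W ≅ H^i_{(f)}(M)`
as graded `A_n(K)`-modules. -/
def IsCechCohomologyOf {K : Type} [Field K] {n : ℕ} {M : GWM K n} {s : ℕ}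
    {f : Fin s → WeylAlgebra K n} (D : CechData K n M s f) (i : ℤ) (W : GWM K n) : Prop :=
  ∃ π : CechLevel D i → W.carrier,
    (∀ x y, π (x + y) = π x + π y) ∧
    (∀ (w : WeylAlgebra K n) x, π (w • x) = w • π x) ∧
    (∀ x, cechIsCycle D i x → (π x = 0 ↔ cechIsBoundary D i x)) ∧
    (∀ (j : ℤ) x, cechIsCycle D i x → cechHomog D i j x → π x ∈ W.deg j) ∧
    (∀ (j : ℤ) (w : W.carrier), w ∈ W.deg j →
      ∃ x, cechIsCycle D i x ∧ cechHomog D i j x ∧ π x = w)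

variable {K : Type} [Field K] {n : ℕ}

lemma wd_wx (i j : Fin n) :
    Wd K i * Wx K j = Wx K j * Wd K i + if i = j then 1 else 0 := by
  have h := RingQuot.mkAlgHom_rel K (WeylRel.dx (K := K) (n := n) i j)
  simp only [map_mul, map_add] at h
  rw [Wd, Wx, h]
  congr 1
  split <;> simp

lemma wx_comm (i j : Fin n) : Wx K i * Wx K j = Wx K j * Wx K i := by
  have h := RingQuot.mkAlgHom_rel K (WeylRel.xx (K := K) (n := n) i j)
  simp only [map_mul] at h
  rw [Wx, Wx, h]

lemma euler_wx (i : Fin n) :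
    weylEuler K n * Wx K i = Wx K i * weylEuler K n + Wx K i := by
  have h2 : ∑ l : Fin n, Wx K l * (if l = i then 1 else 0) = Wx K i := by
    rw [Finset.sum_congr rfl (fun l _ => by rw [mul_ite, mul_one, mul_zero]),
      Finset.sum_ite_eq' Finset.univ i (fun l => Wx K l)]
    simp
  have key : ∀ l : Fin n, Wx K l * Wd K l * Wx K i
      = Wx K i * (Wx K l * Wd K l) + Wx K l * (if l = i then 1 else 0) := by
    intro l
    rw [mul_assoc, wd_wx, mul_add, ← mul_assoc, wx_comm l i, mul_assoc]
  rw [weylEuler, Finset.sum_mul, Finset.sum_congr rfl (fun l _ => key l),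
    Finset.sum_add_distrib, h2, ← Finset.mul_sum]

lemma euler_monList (l : List (Fin n)) :
    weylEuler K n * (l.map (Wx K)).prod
      = (l.map (Wx K)).prod * weylEuler K n + (l.length : WeylAlgebra K n) * (l.map (Wx K)).prod := by
  induction l with
  | nil => simp
  | cons a t ih =>
    simp only [List.map_cons, List.prod_cons, List.length_cons]
    rw [← mul_assoc, euler_wx, add_mul, mul_assoc, ih, mul_add]
    push_cast
    rw [add_mul, one_mul]
    simp only [← mul_assoc]
    rw [(Nat.cast_commute t.length (Wx K a)).eq]
    simp only [mul_assoc]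
    abel

lemma euler_homog {g : WeylAlgebra K n} {d : ℕ} (hg : IsHomogPoly K g d) :
    weylEuler K n * g = g * weylEuler K n + (d : WeylAlgebra K n) * g := by
  induction hg using Submodule.span_induction with
  | mem w hw =>
    obtain ⟨l, hl, rfl⟩ := hw
    rw [euler_monList, hl]
  | zero => simp
  | add x y _ _ hx hy => rw [mul_add, hx, hy, add_mul, mul_add]; abel
  | smul c x _ hx =>
    rw [Algebra.smul_def, ← mul_assoc, ← Algebra.commutes c (weylEuler K n), mul_assoc,
      hx, mul_add]
    simp only [← mul_assoc]
    rw [(Nat.cast_commute d (algebraMap K (WeylAlgebra K n) c)).eq]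

lemma homog_mul {g h : WeylAlgebra K n} {d e : ℕ}
    (hg : IsHomogPoly K g d) (hh : IsHomogPoly K h e) : IsHomogPoly K (g * h) (d + e) := by
  induction hg using Submodule.span_induction with
  | mem w hw =>
    obtain ⟨l, hl, rfl⟩ := hw
    induction hh using Submodule.span_induction with
    | mem w2 hw2 =>
      obtain ⟨l2, hl2, rfl⟩ := hw2
      refine Submodule.subset_span ⟨l ++ l2, ?_, ?_⟩
      · simp [hl, hl2]
      · simp
    | zero => rw [mul_zero]; exact Submodule.zero_mem _
    | add x y _ _ hx hy => rw [mul_add]; exact Submodule.add_mem _ hx hy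
    | smul c x _ hx => rw [mul_smul_comm]; exact Submodule.smul_mem _ c hx
  | zero => rw [zero_mul]; exact Submodule.zero_mem _
  | add x y _ _ hx hy => rw [add_mul]; exact Submodule.add_mem _ hx hy
  | smul c x _ hx => rw [smul_mul_assoc]; exact Submodule.smul_mem _ c hx

lemma homog_pow {g : WeylAlgebra K n} {d : ℕ} (hg : IsHomogPoly K g d) (k : ℕ) :
    IsHomogPoly K (g ^ k) (k * d) := by
  induction k with
  | zero => exact Submodule.subset_span ⟨[], by simp, by simp⟩
  | succ k ih =>
    rw [Nat.succ_mul, pow_succ]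
    exact homog_mul ih hg


lemma comm_pow {A : Type} [Ring A] {u g v : A} (h : u * g = g * v) (a : ℕ) :
    u ^ a * g = g * v ^ a := by
  induction a with
  | zero => simp
  | succ a ih => rw [pow_succ, mul_assoc, h, ← mul_assoc, ih, mul_assoc, ← pow_succ]

lemma euler_shift {g : WeylAlgebra K n} {d : ℕ} (hg : IsHomogPoly K g d) (c : ℤ) :
    (weylEuler K n - ((c + d : ℤ) : WeylAlgebra K n)) * g
      = g * (weylEuler K n - (c : WeylAlgebra K n)) := by
  rw [sub_mul, mul_sub, euler_homog hg, Int.cast_add, Int.cast_natCast, add_mul,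
    ← (Int.cast_commute c g).eq]
  abel

lemma monList_smul_deg {N : GWM K n} (l : List (Fin n)) {j : ℤ} {z : N.carrier}
    (hz : z ∈ N.deg j) : (l.map (Wx K)).prod • z ∈ N.deg (j + l.length) := by
  induction l with
  | nil => simpa using hz
  | cons a t ih =>
    have h := N.x_smul a _ _ ih
    rw [List.map_cons, List.prod_cons, mul_smul]
    convert h using 2
    simp only [List.length_cons, Nat.cast_add, Nat.cast_one]
    ring

lemma homog_smul_deg {N : GWM K n} {g : WeylAlgebra K n} {d : ℕ} (hg : IsHomogPoly K g d)
    {j : ℤ} {z : N.carrier} (hz : z ∈ N.deg j) : g • z ∈ N.deg (j + d) := by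
  induction hg using Submodule.span_induction with
  | mem w hw =>
    obtain ⟨l, hl, rfl⟩ := hw
    subst hl
    exact monList_smul_deg l hz
  | zero => rw [zero_smul]; exact AddSubgroup.zero_mem _
  | add x y _ _ hx hy => rw [add_smul]; exact AddSubgroup.add_mem _ hx hy
  | smul c x _ hx =>
    rw [Algebra.smul_def c x, mul_smul]
    exact N.k_smul c _ _ hx

lemma pow_smul_eq_zero_inj {N : GWM K n} {g : WeylAlgebra K n}
    (hinj : Function.Injective (fun z : N.carrier => g • z)) (k : ℕ) {w : N.carrier}
    (h : (g ^ k) • w = 0) : w = 0 := by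
  induction k with
  | zero => simpa using h
  | succ k ih =>
    rw [pow_succ', mul_smul] at h
    have h2 : (g ^ k) • w = (0 : N.carrier) :=
      hinj (show g • ((g ^ k) • w) = g • (0 : N.carrier) by rw [smul_zero]; exact h)
    exact ih h2

noncomputable def gradedCompMap {M N : GWM K n} (F : M.carrier → N.carrier)
    (Fdeg : ∀ (t : ℤ) x, x ∈ M.deg t → F x ∈ N.deg t) (u : ℤ) (x : M.deg u) : N.deg u :=
  ⟨F x, Fdeg u x x.2⟩

set_option synthInstance.maxHeartbeats 1000000 in
set_option maxHeartbeats 1600000 in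
lemma extract_component {M N : GWM K n} (F : M.carrier → N.carrier)
    (Fadd : ∀ x y, F (x + y) = F x + F y)
    (Fdeg : ∀ (t : ℤ) x, x ∈ M.deg t → F x ∈ N.deg t)
    (t : ℤ) (y : N.carrier) (hy : y ∈ N.deg t) (m : M.carrier) (hm : F m = y) :
    ∃ m' : M.carrier, m' ∈ M.deg t ∧ F m' = y := by
  have F0 : F 0 = 0 := by
    have := Fadd 0 0
    rw [add_zero] at this
    exact left_eq_add.mp this
  classical
  have hf0 : ∀ u, gradedCompMap F Fdeg u 0 = 0 := fun u => Subtype.ext F0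
  have hfadd : ∀ (u : ℤ) (x y : M.deg u),
      gradedCompMap F Fdeg u (x + y) = gradedCompMap F Fdeg u x + gradedCompMap F Fdeg u y :=
    fun u x y => Subtype.ext (Fadd x y)
  have key : ∀ dm : DirectSum ℤ (fun u => ↥(M.deg u)),
      DirectSum.coeAddMonoidHom N.deg (DFinsupp.mapRange (gradedCompMap F Fdeg) hf0 dm)
        = F (DirectSum.coeAddMonoidHom M.deg dm) := by
    intro dm
    induction dm using DFinsupp.induction with
    | h0 => rw [DFinsupp.mapRange_zero, map_zero, map_zero, F0]
    | ha i b r _ _ ih =>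
      rw [DFinsupp.mapRange_add (gradedCompMap F Fdeg) hf0 hfadd, map_add, map_add, Fadd, ih,
        DFinsupp.mapRange_single]
      congr 1
      have h1 : (DFinsupp.single i (gradedCompMap F Fdeg i b) : DirectSum ℤ (fun u => ↥(N.deg u)))
          = DirectSum.of (fun u : ℤ => ↥(N.deg u)) i (gradedCompMap F Fdeg i b) := rfl
      have h2 : (DFinsupp.single i b : DirectSum ℤ (fun u => ↥(M.deg u)))
          = DirectSum.of (fun u : ℤ => M.deg u) i b := rfl
      rw [h1, h2, DirectSum.coeAddMonoidHom_of, DirectSum.coeAddMonoidHom_of]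
      rfl
  obtain ⟨dm, hdm⟩ := M.isInternal.surjective m
  have h1 : DirectSum.coeAddMonoidHom N.deg (DFinsupp.mapRange (gradedCompMap F Fdeg) hf0 dm) = y := by
    rw [key, hdm, hm]
  have h2 : DirectSum.coeAddMonoidHom N.deg
      (DirectSum.of (fun u : ℤ => ↥(N.deg u)) t ⟨y, hy⟩) = y :=
    DirectSum.coeAddMonoidHom_of _ _ _
  have h3 := N.isInternal.injective (h1.trans h2.symm)
  have h4 := congrFun (congrArg DFunLike.coe h3) t
  rw [DFinsupp.mapRange_apply] at h4
  have h5 : DirectSum.of (fun u : ℤ => ↥(N.deg u)) t ⟨y, hy⟩ t = (⟨y, hy⟩ : ↥(N.deg t)) :=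
    DirectSum.of_eq_same (β := fun u : ℤ => ↥(N.deg u)) t ⟨y, hy⟩
  rw [h5] at h4
  refine ⟨(dm t).1, (dm t).2, ?_⟩
  exact congrArg Subtype.val h4


lemma listProd_homog {s : ℕ} {f : Fin s → WeylAlgebra K n} {df : Fin s → ℕ}
    (hf : ∀ k, IsHomogPoly K (f k) (df k)) (l : List (Fin s)) :
    ∃ d : ℕ, IsHomogPoly K ((l.map f).prod) d := by
  induction l with
  | nil => exact ⟨0, Submodule.subset_span ⟨[], by simp, by simp⟩⟩
  | cons a t ih =>
    obtain ⟨d, hd⟩ := ih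
    exact ⟨df a + d, by rw [List.map_cons, List.prod_cons]; exact homog_mul (hf a) hd⟩

lemma loc_genEulerian {M : GWM K n} {s : ℕ} {f : Fin s → WeylAlgebra K n}
    {df : Fin s → ℕ} (hf : ∀ k, IsHomogPoly K (f k) (df k)) (hM : M.IsGenEulerian)
    (D : CechData K n M s f) (S : Finset (Fin s)) (j : ℤ) (z : (D.L S).carrier)
    (hz : z ∈ (D.L S).deg j) :
    ∃ a : ℕ, 1 ≤ a ∧ ((weylEuler K n - (j : WeylAlgebra K n)) ^ a) • z = 0 := by
  obtain ⟨d, hd⟩ := listProd_homog hf (S.sort (· ≤ ·))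
  have hg : IsHomogPoly K (cechProd f S) d := hd
  obtain ⟨m, k, hmk⟩ := D.loc_surj S z
  have hgk : IsHomogPoly K ((cechProd f S) ^ k) (k * d) := homog_pow hg k
  have hyz : ((cechProd f S) ^ k) • z ∈ (D.L S).deg (j + (k * d : ℕ)) :=
    homog_smul_deg hgk hz
  have Fadd : ∀ x y, D.ρ (Finset.empty_subset S) (D.η (x + y))
      = D.ρ (Finset.empty_subset S) (D.η x) + D.ρ (Finset.empty_subset S) (D.η y) :=
    fun x y => by rw [D.η_add, D.ρ_add]
  have Fdeg : ∀ (t : ℤ) x, x ∈ M.deg t →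
      D.ρ (Finset.empty_subset S) (D.η x) ∈ (D.L S).deg t :=
    fun t x hx => D.ρ_deg _ t _ (D.η_deg t x hx)
  have hFm : D.ρ (Finset.empty_subset S) (D.η m) = (cechProd f S) ^ k • z := hmk.symm
  obtain ⟨m', hm'deg, hFm'⟩ := extract_component
    (fun x => D.ρ (Finset.empty_subset S) (D.η x)) Fadd Fdeg
    (j + (k * d : ℕ)) _ hyz m hFm
  obtain ⟨a, ha1, ha⟩ := hM (j + (k * d : ℕ)) m' hm'deg
  refine ⟨a, ha1, ?_⟩
  have comm : (weylEuler K n - ((j + (k * d : ℕ) : ℤ) : WeylAlgebra K n)) * (cechProd f S) ^ k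
      = (cechProd f S) ^ k * (weylEuler K n - (j : WeylAlgebra K n)) := euler_shift hgk j
  have F0 : D.ρ (Finset.empty_subset S) (D.η (0 : M.carrier)) = 0 := by
    have := Fadd 0 0
    rw [add_zero] at this
    exact left_eq_add.mp this
  have e1 : ((weylEuler K n - ((j + (k * d : ℕ) : ℤ) : WeylAlgebra K n)) ^ a)
      • ((cechProd f S) ^ k • z) = 0 := by
    rw [← hFm', ← D.ρ_smul, ← D.η_smul, ha, F0]
  rw [← mul_smul, comm_pow comm a, mul_smul] at e1
  exact pow_smul_eq_zero_inj (D.loc_bij S).injective k e1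

/-- Let `I = (f_1, …, f_s)` be a homogeneous ideal of `R` and `M` a
generalized Eulerian `A_n(K)`-module.  Then `H^i_I(M)` is a generalized Eulerian
`A_n(K)`-module for every `i ≥ 0`:  in the Čech complex of `M` on `f_1, …, f_s`, every
homogeneous `i`-cocycle `φ` of degree `j` has `(ℰ_n - j)^a • φ` a coboundary for some
`a ≥ 1`. -/
theorem local_cohomology_of_generalizedEulerian_is_generalizedEulerian
    (K : Type) [Field K] [CharZero K] (n s : ℕ)
    (f : Fin s → WeylAlgebra K n) (df : Fin s → ℕ)
    (hf : ∀ k, IsHomogPoly K (f k) (df k))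
    (M : GWM K n) (hM : M.IsGenEulerian)
    (D : CechData K n M s f) (i : ℕ) (j : ℤ)
    (φ : CechLevel D (i : ℤ))
    (hcyc : cechIsCycle D (i : ℤ) φ) (hhom : cechHomog D (i : ℤ) j φ) :
    ∃ a : ℕ, 1 ≤ a ∧
      cechIsBoundary D (i : ℤ) (((weylEuler K n - (j : WeylAlgebra K n)) ^ a) • φ) := by
  classical
  have key : ∀ T : {S : Finset (Fin s) // (S.card : ℤ) = (i : ℤ)}, ∃ a : ℕ, 1 ≤ a ∧
      ((weylEuler K n - (j : WeylAlgebra K n)) ^ a) • φ T = 0 :=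
    fun T => loc_genEulerian hf hM D T.1 j (φ T) (hhom T)
  choose a _ ha using key
  set A : ℕ := max 1 (Finset.univ.sup a) with hA
  have hzero : ∀ T, ((weylEuler K n - (j : WeylAlgebra K n)) ^ A) • φ T = 0 := by
    intro T
    have hle : a T ≤ A := le_trans (Finset.le_sup (Finset.mem_univ T)) (le_max_right _ _)
    have hAe : A = (A - a T) + a T := (Nat.sub_add_cancel hle).symm
    rw [hAe, pow_add, mul_smul, ha T, smul_zero]
  have ρ0 : ∀ (S T' : Finset (Fin s)) (h : S ⊆ T'), D.ρ h (0 : (D.L S).carrier) = 0 := by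
    intro S T' h
    have := D.ρ_add h 0 0
    rw [add_zero] at this
    exact left_eq_add.mp this
  refine ⟨max 1 (Finset.univ.sup a), le_max_left _ _, fun _ => 0, ?_⟩
  funext T
  have : (((weylEuler K n - (j : WeylAlgebra K n)) ^ A) • φ) T = 0 := hzero T
  rw [← hA, this]
  simp [cechDiff, ρ0]
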